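/- For a finite connected simple graph G on n ≥ 2 vertices, the Kirchhoff index, defined as one half the sum of all entries of the resistance-distance matrix, is at least n − 1, with equality if and only if G is the complete graph K_n. -/

import Mathlib

open Matrix SimpleGraph Finset

variable {V : Type*} [Fintype V] [DecidableEq V]

/-- The matrix Γ = L + (1/n)J where L is the Laplacian and J the all-ones matrix. -/
noncomputable def gammaMatrix (G : SimpleGraph V) : Matrix V V ℝ := by
  classical
  exact G.lapMatrix ℝ + ((Fintype.card V : ℝ))⁻¹ • Matrix.of (fun _ _ => (1 : ℝ))

/-- The resistance distance Ω_{ij} = (Γ⁻¹)_{ii} + (Γ⁻¹)_{jj} − 2(Γ⁻¹)_{ij}. -/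
noncomputable def resDist (G : SimpleGraph V) (i j : V) : ℝ :=
  (gammaMatrix G)⁻¹ i i + (gammaMatrix G)⁻¹ j j - 2 * (gammaMatrix G)⁻¹ i j

lemma gamma_isHermitian (G : SimpleGraph V) : (gammaMatrix G).IsHermitian := by
  classical
  unfold gammaMatrix
  refine IsHermitian.add ?_ ?_
  · rw [IsHermitian, conjTranspose_eq_transpose_of_trivial, isSymm_lapMatrix]
  · ext i j; simp [conjTranspose_apply]

lemma gamma_mulVec_one (G : SimpleGraph V) [Nonempty V] :
    gammaMatrix G *ᵥ (fun _ => (1:ℝ)) = fun _ => 1 := by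
  classical
  unfold gammaMatrix
  rw [add_mulVec, lapMatrix_mulVec_const_eq_zero, smul_mulVec]
  have hn : (Fintype.card V : ℝ) ≠ 0 := Nat.cast_ne_zero.mpr Fintype.card_ne_zero
  ext i
  simp [mulVec, dotProduct, Finset.card_univ, hn]

lemma gamma_posDef (G : SimpleGraph V) [Nonempty V] (hG : G.Connected) :
    (gammaMatrix G).PosDef := by
  classical
  refine Matrix.PosDef.of_dotProduct_mulVec_pos (gamma_isHermitian G) fun ⦃x⦄ hx => ?_
  have key : dotProduct (star x) (gammaMatrix G *ᵥ x) =
      (Matrix.toLinearMap₂' ℝ (G.lapMatrix ℝ) x x) +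
        (Fintype.card V : ℝ)⁻¹ * (∑ i, x i)^2 := by
    unfold gammaMatrix
    rw [toLinearMap₂'_apply', star_trivial, add_mulVec, dotProduct_add, smul_mulVec,
      dotProduct_smul]
    congr 1
    simp [mulVec, dotProduct, sq, Finset.sum_mul]
  rw [key]
  have h1 : 0 ≤ Matrix.toLinearMap₂' ℝ (G.lapMatrix ℝ) x x := by
    have := (posSemidef_lapMatrix ℝ G).dotProduct_mulVec_nonneg x
    rwa [star_trivial, ← toLinearMap₂'_apply'] at this
  have hn : (0:ℝ) < (Fintype.card V : ℝ) := by positivity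
  rcases lt_or_eq_of_le h1 with h | h
  · have : 0 ≤ (Fintype.card V : ℝ)⁻¹ * (∑ i, x i)^2 := by positivity
    linarith
  · have hconst := (lapMatrix_toLinearMap₂'_apply'_eq_zero_iff_forall_reachable G x).mp h.symm
    obtain ⟨i⟩ := ‹Nonempty V›
    have hxc : ∀ j, x j = x i := fun j => hconst j i (hG.preconnected j i)
    have hxi : x i ≠ 0 := by
      intro h0
      exact hx (funext fun j => by rw [hxc j, h0]; rfl)
    have hsum : ∑ j, x j = (Fintype.card V : ℝ) * x i := by
      rw [Finset.sum_congr rfl (fun j _ => hxc j)]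
      simp [Finset.card_univ, mul_comm]
    rw [← h, hsum]
    have : (0:ℝ) < ((Fintype.card V : ℝ) * x i)^2 := by positivity
    positivity

lemma gamma_det_ne_zero (G : SimpleGraph V) [Nonempty V] (hG : G.Connected) :
    (gammaMatrix G).det ≠ 0 := (gamma_posDef G hG).det_pos.ne'

lemma gammaInv_mulVec_one (G : SimpleGraph V) [Nonempty V] (hG : G.Connected) :
    (gammaMatrix G)⁻¹ *ᵥ (fun _ => (1:ℝ)) = fun _ => 1 := by
  conv_lhs => rw [← gamma_mulVec_one G]
  rw [mulVec_mulVec, nonsing_inv_mul _ (isUnit_iff_ne_zero.mpr (gamma_det_ne_zero G hG)),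
    one_mulVec]

lemma gammaInv_row_sum (G : SimpleGraph V) [Nonempty V] (hG : G.Connected) (i : V) :
    ∑ j, (gammaMatrix G)⁻¹ i j = 1 := by
  have := congrFun (gammaInv_mulVec_one G hG) i
  simpa [mulVec, dotProduct] using this

lemma gammaInv_symm (G : SimpleGraph V) [Nonempty V] (hG : G.Connected) (i j : V) :
    (gammaMatrix G)⁻¹ i j = (gammaMatrix G)⁻¹ j i := by
  have h := ((gamma_posDef G hG).inv).isHermitian
  have := congrFun (congrFun h j) i
  rw [conjTranspose_apply, star_trivial] at this
  exact this

lemma gammaInv_col_sum (G : SimpleGraph V) [Nonempty V] (hG : G.Connected) (j : V) :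
    ∑ i, (gammaMatrix G)⁻¹ i j = 1 := by
  simp_rw [fun i => gammaInv_symm G hG i j]
  exact gammaInv_row_sum G hG j

lemma kf_eq (G : SimpleGraph V) [Nonempty V] (hG : G.Connected) :
    (1 / 2 : ℝ) * ∑ i : V, ∑ j : V, resDist G i j =
      (Fintype.card V : ℝ) * (gammaMatrix G)⁻¹.trace - (Fintype.card V : ℝ) := by
  have h : ∀ i : V, ∑ j : V, resDist G i j =
      (Fintype.card V : ℝ) * (gammaMatrix G)⁻¹ i i + (gammaMatrix G)⁻¹.trace - 2 := by
    intro i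
    unfold resDist
    rw [Finset.sum_sub_distrib, Finset.sum_add_distrib, Finset.sum_const, Finset.card_univ,
      ← Finset.mul_sum, gammaInv_row_sum G hG i]
    simp [Matrix.trace, Matrix.diag, nsmul_eq_mul, mul_comm]
  simp_rw [h]
  rw [Finset.sum_sub_distrib, Finset.sum_add_distrib, Finset.sum_const, Finset.sum_const,
    ← Finset.mul_sum]
  simp only [Finset.card_univ, nsmul_eq_mul]
  have : ∑ i : V, (gammaMatrix G)⁻¹ i i = (gammaMatrix G)⁻¹.trace := rfl
  rw [this]
  ring

lemma gammaTop_apply (i j : V) :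
    gammaMatrix (⊤ : SimpleGraph V) i j =
      (Fintype.card V : ℝ) * (if i = j then 1 else 0) + ((Fintype.card V : ℝ)⁻¹ - 1) := by
  have hpos : 0 < Fintype.card V := Fintype.card_pos_iff.mpr ⟨i⟩
  have hrw : gammaMatrix (⊤ : SimpleGraph V) =
      (⊤ : SimpleGraph V).lapMatrix ℝ +
        ((Fintype.card V : ℝ))⁻¹ • Matrix.of (fun _ _ => (1 : ℝ)) := by
    unfold gammaMatrix
    congr!
  rw [hrw]
  by_cases h : i = j
  · subst h
    simp only [Matrix.add_apply, lapMatrix, Matrix.sub_apply, degMatrix, diagonal_apply_eq, adjMatrix_apply,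
      top_adj, ne_eq, not_true_eq_false, if_false, if_true, Matrix.smul_apply, of_apply, smul_eq_mul,
      mul_one, complete_graph_degree]
    rw [Nat.cast_sub hpos]
    push_cast
    ring
  · simp only [Matrix.add_apply, lapMatrix, Matrix.sub_apply, degMatrix, diagonal_apply_ne _ h, adjMatrix_apply,
      top_adj, ne_eq, Matrix.smul_apply, of_apply, smul_eq_mul, mul_one, if_neg h]
    rw [if_pos h]
    ring

noncomputable def gammaTopInv : Matrix V V ℝ :=
  ((Fintype.card V : ℝ))⁻¹ • (1 : Matrix V V ℝ) +
    (((Fintype.card V : ℝ) - 1)/(Fintype.card V : ℝ)^2) • Matrix.of (fun _ _ => (1 : ℝ))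

lemma gammaTopInv_apply (i j : V) :
    (gammaTopInv : Matrix V V ℝ) i j =
      (Fintype.card V : ℝ)⁻¹ * (if i = j then 1 else 0) +
        ((Fintype.card V : ℝ) - 1)/(Fintype.card V : ℝ)^2 := by
  unfold gammaTopInv
  by_cases h : i = j <;> simp [h, one_apply, mul_comm]

lemma gammaTop_mul_inv [Nonempty V] :
    gammaMatrix (⊤ : SimpleGraph V) * (gammaTopInv : Matrix V V ℝ) = 1 := by
  have hc : (Fintype.card V : ℝ) ≠ 0 := Nat.cast_ne_zero.mpr Fintype.card_ne_zero
  ext i k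
  rw [mul_apply]
  simp_rw [gammaTop_apply, gammaTopInv_apply]
  set c : ℝ := (Fintype.card V : ℝ) with hcdef
  set a : ℝ := c⁻¹ - 1
  set b : ℝ := (c - 1)/c^2
  have expand : ∀ j : V, (c * (if i = j then 1 else 0) + a) * (c⁻¹ * (if j = k then 1 else 0) + b)
      = (if i = j then 1 else 0) * (if j = k then 1 else 0) * (c * c⁻¹)
        + (if i = j then 1 else 0) * (c * b) + (if j = k then 1 else 0) * (a * c⁻¹) + a * b := by
    intro j; ring
  rw [Finset.sum_congr rfl (fun j _ => expand j)]
  rw [Finset.sum_add_distrib, Finset.sum_add_distrib, Finset.sum_add_distrib]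
  have s1 : ∑ j : V, (if i = j then 1 else 0) * (if j = k then (1:ℝ) else 0) * (c * c⁻¹)
      = (if i = k then 1 else 0) * (c * c⁻¹) := by
    rw [← Finset.sum_mul]
    congr 1
    simp [Finset.sum_ite_eq]
  have s2 : ∑ j : V, (if i = j then (1:ℝ) else 0) * (c * b) = c * b := by
    simp [Finset.sum_ite_eq]
  have s3 : ∑ j : V, (if j = k then (1:ℝ) else 0) * (a * c⁻¹) = a * c⁻¹ := by
    simp [Finset.sum_ite_eq']
  have s4 : ∑ _j : V, a * b = c * (a * b) := by
    rw [Finset.sum_const, Finset.card_univ, nsmul_eq_mul, hcdef]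
  rw [s1, s2, s3, s4, one_apply]
  have hab : c * b + a * c⁻¹ + c * (a * b) = 0 := by
    simp only [a, b]
    field_simp
    ring
  by_cases h : i = k <;> simp [h, mul_inv_cancel₀ hc] <;> linarith [hab]

lemma gammaTop_inv_eq [Nonempty V] :
    (gammaMatrix (⊤ : SimpleGraph V))⁻¹ = (gammaTopInv : Matrix V V ℝ) :=
  inv_eq_right_inv gammaTop_mul_inv

lemma trace_gammaTopInv [Nonempty V] :
    (gammaTopInv : Matrix V V ℝ).trace =
      (2 * (Fintype.card V : ℝ) - 1) / (Fintype.card V : ℝ) := by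
  have hc : (Fintype.card V : ℝ) ≠ 0 := Nat.cast_ne_zero.mpr Fintype.card_ne_zero
  have : (gammaTopInv : Matrix V V ℝ).trace
      = ∑ i : V, ((Fintype.card V : ℝ)⁻¹ * 1 + ((Fintype.card V : ℝ) - 1)/(Fintype.card V : ℝ)^2) := by
    unfold Matrix.trace
    refine Finset.sum_congr rfl fun i _ => ?_
    rw [Matrix.diag_apply, gammaTopInv_apply, if_pos rfl]
  rw [this, Finset.sum_const, Finset.card_univ, nsmul_eq_mul]
  field_simp
  ring

lemma psd_diag_nonneg {M : Matrix V V ℝ} (hM : M.PosSemidef) (i : V) : 0 ≤ M i i := by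
  have := hM.dotProduct_mulVec_nonneg (Pi.single i 1)
  simpa [mulVec, dotProduct, Pi.single_apply] using this

lemma psd_trace_nonneg {M : Matrix V V ℝ} (hM : M.PosSemidef) : 0 ≤ M.trace :=
  Finset.sum_nonneg fun i _ => psd_diag_nonneg hM i

lemma psd_trace_eq_zero {M : Matrix V V ℝ} (hM : M.PosSemidef) (h : M.trace = 0) : M = 0 := by
  obtain ⟨B, hBH, hBB⟩ : ∃ B : Matrix V V ℝ, Bᴴ = B ∧ B * B = M :=
    by open scoped MatrixOrder in exact ⟨CFC.sqrt M, (CFC.sqrt_nonneg M).posSemidef.isHermitian, CFC.sqrt_mul_sqrt_self M hM.nonneg⟩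
  have htr : M.trace = ∑ j : V, ∑ i : V, (B i j)^2 := by
    rw [← hBB]
    unfold Matrix.trace
    refine Finset.sum_congr rfl fun j _ => ?_
    rw [Matrix.diag_apply, mul_apply]
    refine Finset.sum_congr rfl fun i _ => ?_
    have : B j i = B i j := by
      conv_lhs => rw [← hBH]
      simp [conjTranspose_apply]
    rw [this, sq]
  rw [htr] at h
  have hz : ∀ j ∈ Finset.univ, ∑ i : V, (B i j)^2 = 0 := by
    rw [← Finset.sum_eq_zero_iff_of_nonneg]
    · exact h
    · intro j _
      positivity
  have hsz : B = 0 := by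
    ext i j
    have := (Finset.sum_eq_zero_iff_of_nonneg (fun i _ => sq_nonneg (B i j))).mp
      (hz j (Finset.mem_univ j)) i (Finset.mem_univ i)
    simpa using pow_eq_zero_iff (n := 2) (by norm_num) |>.mp this
  rw [← hBB, hsz, Matrix.mul_zero]

lemma inv_sub_inv_psd {A B : Matrix V V ℝ} (hA : A.PosDef) (hB : B.PosDef)
    (hBA : (B - A).PosSemidef) : (A⁻¹ - B⁻¹).PosSemidef := by
  have hAd : IsUnit A.det := isUnit_iff_ne_zero.mpr hA.det_pos.ne'
  have hBd : IsUnit B.det := isUnit_iff_ne_zero.mpr hB.det_pos.ne'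
  have hA1 : A * A⁻¹ = 1 := mul_nonsing_inv _ hAd
  have hA2 : A⁻¹ * A = 1 := nonsing_inv_mul _ hAd
  have hB1 : B * B⁻¹ = 1 := mul_nonsing_inv _ hBd
  have hB2 : B⁻¹ * B = 1 := nonsing_inv_mul _ hBd
  have hAiH : (A⁻¹)ᴴ = A⁻¹ := hA.inv.isHermitian
  have hBiH : (B⁻¹)ᴴ = B⁻¹ := hB.inv.isHermitian
  have key : A⁻¹ - B⁻¹ = (B⁻¹ - A⁻¹)ᴴ * A * (B⁻¹ - A⁻¹) + (B⁻¹)ᴴ * (B - A) * B⁻¹ := by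
    rw [conjTranspose_sub, hAiH, hBiH]
    have e1 : (B⁻¹ - A⁻¹) * A * (B⁻¹ - A⁻¹)
        = B⁻¹ * A * B⁻¹ - B⁻¹ * A * A⁻¹ - A⁻¹ * A * B⁻¹ + A⁻¹ * A * A⁻¹ := by
      simp only [Matrix.sub_mul, Matrix.mul_sub]
      abel
    have e2 : B⁻¹ * (B - A) * B⁻¹ = B⁻¹ * B * B⁻¹ - B⁻¹ * A * B⁻¹ := by
      simp only [Matrix.sub_mul, Matrix.mul_sub]
    rw [e1, e2]
    rw [Matrix.mul_assoc B⁻¹ A A⁻¹, hA1, Matrix.mul_one, hA2, Matrix.one_mul, hB2,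
      Matrix.one_mul, Matrix.one_mul]
    abel
  rw [key]
  exact Matrix.PosSemidef.add (hA.posSemidef.conjTranspose_mul_mul_same _)
    (hBA.conjTranspose_mul_mul_same _)

lemma gamma_diff_eq (G : SimpleGraph V) [DecidableRel G.Adj] :
    gammaMatrix (⊤ : SimpleGraph V) - gammaMatrix G =
      (⊤ : SimpleGraph V).lapMatrix ℝ - G.lapMatrix ℝ := by
  unfold gammaMatrix
  rw [add_sub_add_right_eq_sub]
  congr!

lemma gamma_diff_psd (G : SimpleGraph V) [DecidableRel G.Adj] :
    (gammaMatrix (⊤ : SimpleGraph V) - gammaMatrix G).PosSemidef := by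
  rw [gamma_diff_eq]
  refine Matrix.PosSemidef.of_dotProduct_mulVec_nonneg ?_ ?_
  · refine Matrix.IsHermitian.sub ?_ ?_ <;>
      rw [IsHermitian, conjTranspose_eq_transpose_of_trivial, isSymm_lapMatrix]
  · intro x
    rw [star_trivial, sub_mulVec, dotProduct_sub, ← toLinearMap₂'_apply', ← toLinearMap₂'_apply',
      lapMatrix_toLinearMap₂', lapMatrix_toLinearMap₂']
    have hle : (∑ i : V, ∑ j : V, if G.Adj i j then (x i - x j)^2 else 0)
        ≤ ∑ i : V, ∑ j : V, if (⊤ : SimpleGraph V).Adj i j then (x i - x j)^2 else 0 := by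
      refine Finset.sum_le_sum fun i _ => Finset.sum_le_sum fun j _ => ?_
      by_cases hadj : G.Adj i j
      · rw [if_pos hadj, if_pos (by simpa [top_adj] using G.ne_of_adj hadj)]
      · rw [if_neg hadj]
        split_ifs
        · exact sq_nonneg _
        · exact le_refl _
    linarith

lemma eq_top_of_gamma_eq (G : SimpleGraph V)
    (h : gammaMatrix G = gammaMatrix (⊤ : SimpleGraph V)) : G = ⊤ := by
  classical
  ext i j
  simp only [top_adj]
  constructor
  · exact fun hadj => G.ne_of_adj hadj
  · intro hne
    by_contra hadj
    have hGij : gammaMatrix G i j = (Fintype.card V : ℝ)⁻¹ := by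
      unfold gammaMatrix
      simp [lapMatrix, degMatrix, diagonal_apply_ne _ hne, adjMatrix_apply, hadj]
    have hTij : gammaMatrix (⊤ : SimpleGraph V) i j = (Fintype.card V : ℝ)⁻¹ - 1 := by
      rw [gammaTop_apply, if_neg hne]
      ring
    rw [h, hTij] at hGij
    linarith

theorem kirchhoff_ge_card_sub_one (G : SimpleGraph V) [Nonempty V]
    (hn : 2 ≤ Fintype.card V) (hG : G.Connected) :
    (Fintype.card V : ℝ) - 1 ≤ (1 / 2 : ℝ) * ∑ i : V, ∑ j : V, resDist G i j ∧
    ((1 / 2 : ℝ) * ∑ i : V, ∑ j : V, resDist G i j = (Fintype.card V : ℝ) - 1 ↔ G = ⊤) := by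
  classical
  have hc : (Fintype.card V : ℝ) ≠ 0 := Nat.cast_ne_zero.mpr Fintype.card_ne_zero
  have hcpos : (0:ℝ) < (Fintype.card V : ℝ) := by positivity
  have htopconn : (⊤ : SimpleGraph V).Connected := connected_top
  have hkf : (1 / 2 : ℝ) * ∑ i : V, ∑ j : V, resDist G i j =
      (Fintype.card V : ℝ) * (gammaMatrix G)⁻¹.trace - (Fintype.card V : ℝ) := kf_eq G hG
  have hTtr : (gammaMatrix (⊤ : SimpleGraph V))⁻¹.trace =
      (2 * (Fintype.card V : ℝ) - 1) / (Fintype.card V : ℝ) := by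
    rw [gammaTop_inv_eq, trace_gammaTopInv]
  -- the PSD difference of inverses
  have hdiff : ((gammaMatrix G)⁻¹ - (gammaMatrix (⊤ : SimpleGraph V))⁻¹).PosSemidef :=
    inv_sub_inv_psd (gamma_posDef G hG) (gamma_posDef ⊤ htopconn) (gamma_diff_psd G)
  have htr_diff : (gammaMatrix (⊤ : SimpleGraph V))⁻¹.trace ≤ (gammaMatrix G)⁻¹.trace := by
    have h0 := psd_trace_nonneg hdiff
    rw [Matrix.trace_sub] at h0
    linarith
  have hineq : (Fintype.card V : ℝ) - 1 ≤ (1 / 2 : ℝ) * ∑ i : V, ∑ j : V, resDist G i j := by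
    rw [hkf]
    have : (Fintype.card V : ℝ) * ((2 * (Fintype.card V : ℝ) - 1) / (Fintype.card V : ℝ))
        = 2 * (Fintype.card V : ℝ) - 1 := by field_simp
    nlinarith [htr_diff, hTtr]
  refine ⟨hineq, ?_, ?_⟩
  · -- equality → G = ⊤
    intro heq
    rw [hkf] at heq
    have htr_eq : (gammaMatrix G)⁻¹.trace = (gammaMatrix (⊤ : SimpleGraph V))⁻¹.trace := by
      rw [hTtr]
      field_simp at heq ⊢
      nlinarith [heq]
    have hzero : (gammaMatrix G)⁻¹ - (gammaMatrix (⊤ : SimpleGraph V))⁻¹ = 0 :=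
      psd_trace_eq_zero hdiff (by rw [Matrix.trace_sub, htr_eq, sub_self])
    have hinv_eq : (gammaMatrix G)⁻¹ = (gammaMatrix (⊤ : SimpleGraph V))⁻¹ := by
      have := sub_eq_zero.mp hzero
      exact this
    have hgamma_eq : gammaMatrix G = gammaMatrix (⊤ : SimpleGraph V) := by
      have h1 : ((gammaMatrix G)⁻¹)⁻¹ = ((gammaMatrix (⊤ : SimpleGraph V))⁻¹)⁻¹ := by
        rw [hinv_eq]
      rwa [Matrix.nonsing_inv_nonsing_inv _ (isUnit_iff_ne_zero.mpr (gamma_det_ne_zero G hG)),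
        Matrix.nonsing_inv_nonsing_inv _
          (isUnit_iff_ne_zero.mpr (gamma_det_ne_zero ⊤ htopconn))] at h1
    exact eq_top_of_gamma_eq G hgamma_eq
  · -- G = ⊤ → equality
    intro hGtop
    subst hGtop
    rw [hkf, hTtr]
    field_simp
    ring
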